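/- Let c > 0, D > 0, let G : ℝ → ℝ be continuous, and let U : ℝ → ℝ be a bounded, nondecreasing, C² solution of c U'(s) = D U''(s) + G(U(s)) for all s ∈ ℝ. Then the limits U(-∞) := lim_{s→-∞} U(s) and U(+∞) := lim_{s→+∞} U(s) exist, U'(s) → 0 and U''(s) → 0 as s → ±∞, and G(U(-∞)) = G(U(+∞)) = 0. -/

import Mathlib

open MeasureTheory Filter Topology

set_option maxHeartbeats 1000000

lemma hasDeriv_exp_negmul (k r : ℝ) :
    HasDerivAt (fun x : ℝ => Real.exp (-(k * x))) (-k * Real.exp (-(k * r))) r := by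
  have h1 : HasDerivAt (fun x : ℝ => -(k * x)) (-k) r := by
    simpa using ((hasDerivAt_id r).const_mul k).fun_neg
  simpa [mul_comm] using h1.exp

lemma intExp {k : ℝ} (hk : k ≠ 0) (a b : ℝ) :
    ∫ r in a..b, Real.exp (-(k * r)) =
      (Real.exp (-(k * a)) - Real.exp (-(k * b))) / k := by
  have h : ∀ r ∈ Set.uIcc a b, HasDerivAt (fun x : ℝ => -(Real.exp (-(k * x)) / k))
      (Real.exp (-(k * r))) r := by
    intro r _
    have h2 := ((hasDeriv_exp_negmul k r).div_const k).fun_neg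
    refine h2.congr_deriv ?_
    field_simp
  rw [intervalIntegral.integral_eq_sub_of_hasDerivAt h
    (Continuous.intervalIntegrable (by continuity) a b)]
  field_simp
  ring

lemma expIntegrableOn {k : ℝ} (hk : 0 < k) (a : ℝ) :
    IntegrableOn (fun r : ℝ => Real.exp (-(k * r))) (Set.Ioi a) := by
  simpa [neg_mul] using exp_neg_integrableOn_Ioi a hk

lemma tendsto_exp_negmul {k : ℝ} (hk : 0 < k) :
    Tendsto (fun t : ℝ => Real.exp (-(k * t))) atTop (𝓝 0) := by
  have h1 : Tendsto (fun t : ℝ => k * t) atTop atTop :=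
    Tendsto.const_mul_atTop hk tendsto_id
  have h2 : Tendsto (fun t : ℝ => -(k * t)) atTop atBot := tendsto_neg_atBot_iff.2 h1
  exact Real.tendsto_exp_atBot.comp h2

lemma intExpIoi {k : ℝ} (hk : 0 < k) (a : ℝ) :
    ∫ r in Set.Ioi a, Real.exp (-(k * r)) = Real.exp (-(k * a)) / k := by
  have h1 := intervalIntegral_tendsto_integral_Ioi a (expIntegrableOn hk a) tendsto_id
  have h2 : Tendsto (fun t : ℝ => ∫ r in a..t, Real.exp (-(k * r))) atTop
      (𝓝 (Real.exp (-(k * a)) / k)) := by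
    simp only [intExp hk.ne']
    have h3 : Tendsto (fun t : ℝ => (Real.exp (-(k*a)) - Real.exp (-(k*t))) / k) atTop
        (𝓝 ((Real.exp (-(k*a)) - 0) / k)) :=
      (tendsto_const_nhds.sub (tendsto_exp_negmul hk)).div_const k
    simpa using h3
  exact tendsto_nhds_unique h1 h2

lemma Monotone.deriv_nonneg'' {f : ℝ → ℝ} {x : ℝ} (hf : Monotone f)
    (hd : DifferentiableAt ℝ f x) : 0 ≤ deriv f x := by
  have h := hd.hasDerivAt
  rw [hasDerivAt_iff_tendsto_slope] at h
  have h' : Tendsto (slope f x) (𝓝[>] x) (𝓝 (deriv f x)) :=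
    h.mono_left (nhdsWithin_mono x (fun y hy => ne_of_gt hy))
  refine _root_.ge_of_tendsto h' ?_
  filter_upwards [self_mem_nhdsWithin] with y hy
  rw [slope_def_field]
  exact div_nonneg (sub_nonneg.2 (hf (le_of_lt hy))) (sub_nonneg.2 (le_of_lt hy))


lemma tendsto_deriv_atBot {k L : ℝ} (hk : 0 < k) {W g : ℝ → ℝ}
    (hgc : Continuous g)
    (hgL : Tendsto g atBot (𝓝 L))
    (key : ∀ a b, a ≤ b →
      Real.exp (-(k * b)) * W b - Real.exp (-(k * a)) * W a
        = -∫ r in a..b, Real.exp (-(k * r)) * g r) :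
    Tendsto W atBot (𝓝 (L / k)) := by
  rw [Metric.tendsto_nhds]
  intro ε hε
  rw [eventually_atBot]
  have hε2 : 0 < ε * k / 2 := by positivity
  obtain ⟨s₀, hs₀⟩ := eventually_atBot.1 (Metric.tendsto_nhds.1 hgL (ε * k / 2) hε2)
  set B := |W s₀ - L / k| + 1 with hB
  have hBpos : 0 < B := by positivity
  refine ⟨min s₀ (s₀ + Real.log (ε / (2 * B)) / k), fun s hs => ?_⟩
  have hss₀ : s ≤ s₀ := le_trans hs (min_le_left _ _)
  have hkey := key s s₀ hss₀
  set J := ∫ r in s..s₀, Real.exp (-(k * r)) * (g r - L) with hJdef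
  have hint1 : IntervalIntegrable (fun r => Real.exp (-(k * r)) * (g r - L)) volume s s₀ :=
    Continuous.intervalIntegrable (by continuity) _ _
  have hint2 : IntervalIntegrable (fun r => L * Real.exp (-(k * r))) volume s s₀ :=
    Continuous.intervalIntegrable (by continuity) _ _
  have hsplit : (∫ r in s..s₀, Real.exp (-(k * r)) * g r)
      = J + L * ((Real.exp (-(k * s)) - Real.exp (-(k * s₀))) / k) := by
    have heq : (fun r => Real.exp (-(k * r)) * g r)
        = fun r => Real.exp (-(k * r)) * (g r - L) + L * Real.exp (-(k * r)) := by
      funext r; ring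
    rw [heq, intervalIntegral.integral_add hint1 hint2, hJdef,
      intervalIntegral.integral_const_mul, intExp hk.ne']
  -- core identity
  have hiden : Real.exp (-(k * s)) * (W s - L / k)
      = Real.exp (-(k * s₀)) * (W s₀ - L / k) + J := by
    rw [hsplit] at hkey
    field_simp at hkey ⊢
    linarith
  -- estimate on J
  have hJbound : |J| ≤ ε / 2 * Real.exp (-(k * s)) := by
    have h1 : |J| ≤ ∫ r in s..s₀, |Real.exp (-(k * r)) * (g r - L)| :=
      intervalIntegral.abs_integral_le_integral_abs hss₀
    have h2 : (∫ r in s..s₀, |Real.exp (-(k * r)) * (g r - L)|)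
        ≤ ∫ r in s..s₀, (ε * k / 2) * Real.exp (-(k * r)) := by
      refine intervalIntegral.integral_mono_on hss₀ ?_ ?_ ?_
      · exact Continuous.intervalIntegrable (by continuity) _ _
      · exact Continuous.intervalIntegrable (by continuity) _ _
      · intro x hx
        rw [abs_mul, Real.abs_exp]
        have := hs₀ x hx.2
        rw [Real.dist_eq] at this
        have hx2 : |g x - L| ≤ ε * k / 2 := le_of_lt this
        calc Real.exp (-(k * x)) * |g x - L|
            ≤ Real.exp (-(k * x)) * (ε * k / 2) :=
              mul_le_mul_of_nonneg_left hx2 (Real.exp_pos _).le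
          _ = (ε * k / 2) * Real.exp (-(k * x)) := by ring
    have h3 : (∫ r in s..s₀, (ε * k / 2) * Real.exp (-(k * r)))
        = (ε * k / 2) * ((Real.exp (-(k * s)) - Real.exp (-(k * s₀))) / k) := by
      rw [intervalIntegral.integral_const_mul, intExp hk.ne']
    have h4 : (ε * k / 2) * ((Real.exp (-(k * s)) - Real.exp (-(k * s₀))) / k)
        ≤ ε / 2 * Real.exp (-(k * s)) := by
      have he : (ε * k / 2) * ((Real.exp (-(k * s)) - Real.exp (-(k * s₀))) / k)
          = ε / 2 * Real.exp (-(k * s)) - ε / 2 * Real.exp (-(k * s₀)) := by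
        field_simp
      rw [he]
      nlinarith [Real.exp_pos (-(k * s₀))]
    linarith
  -- final estimate
  have hWfin : |W s - L / k| ≤ Real.exp (k * (s - s₀)) * |W s₀ - L / k| + ε / 2 := by
    calc |W s - L / k|
        = Real.exp (k * s) * |Real.exp (-(k * s)) * (W s - L / k)| := by
          rw [abs_mul, Real.abs_exp, ← mul_assoc, ← Real.exp_add]
          simp
      _ ≤ Real.exp (k * s) * (Real.exp (-(k * s₀)) * |W s₀ - L / k| + |J|) := by
          refine mul_le_mul_of_nonneg_left ?_ (Real.exp_pos _).le
          rw [hiden]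
          refine le_trans (abs_add_le _ _) ?_
          rw [abs_mul, Real.abs_exp]
      _ ≤ Real.exp (k * s) * (Real.exp (-(k * s₀)) * |W s₀ - L / k|)
            + Real.exp (k * s) * (ε / 2 * Real.exp (-(k * s))) := by
          rw [mul_add]
          refine add_le_add le_rfl (mul_le_mul_of_nonneg_left hJbound (Real.exp_pos _).le)
      _ = Real.exp (k * (s - s₀)) * |W s₀ - L / k| + ε / 2 := by
          rw [← mul_assoc, ← Real.exp_add,
            show k * s + -(k * s₀) = k * (s - s₀) by ring]
          have he2 : Real.exp (k * s) * (ε / 2 * Real.exp (-(k * s)))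
              = ε / 2 * Real.exp (k * s + -(k * s)) := by
            rw [Real.exp_add]; ring
          rw [he2]
          simp
  -- exp small
  have hexp : Real.exp (k * (s - s₀)) ≤ ε / (2 * B) := by
    have hεB : 0 < ε / (2 * B) := by positivity
    have hs' : s ≤ s₀ + Real.log (ε / (2 * B)) / k := le_trans hs (min_le_right _ _)
    have : k * (s - s₀) ≤ Real.log (ε / (2 * B)) := by
      have := sub_le_iff_le_add'.2 hs'
      calc k * (s - s₀) ≤ k * (Real.log (ε / (2 * B)) / k) := by
            refine mul_le_mul_of_nonneg_left ?_ hk.le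
            linarith [sub_le_iff_le_add'.2 hs']
        _ = Real.log (ε / (2 * B)) := by field_simp
    calc Real.exp (k * (s - s₀)) ≤ Real.exp (Real.log (ε / (2 * B))) := Real.exp_le_exp.2 this
      _ = ε / (2 * B) := Real.exp_log hεB
  rw [Real.dist_eq]
  have hfin : Real.exp (k * (s - s₀)) * |W s₀ - L / k| < ε / 2 := by
    calc Real.exp (k * (s - s₀)) * |W s₀ - L / k|
        ≤ ε / (2 * B) * |W s₀ - L / k| :=
          mul_le_mul_of_nonneg_right hexp (abs_nonneg _)
      _ < ε / (2 * B) * B := by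
          refine (mul_lt_mul_iff_right₀ (by positivity)).2 ?_
          rw [hB]; linarith
      _ = ε / 2 := by field_simp
  linarith


lemma tendsto_deriv_atTop {k L M C : ℝ} (hk : 0 < k) {W g : ℝ → ℝ}
    (hgc : Continuous g) (hW0 : ∀ s, 0 ≤ W s)
    (hM : ∀ r, |g r| ≤ M)
    (hInt : ∀ a b, a ≤ b → (∫ r in a..b, W r) ≤ C)
    (hWc : Continuous W)
    (hgL : Tendsto g atTop (𝓝 L))
    (key : ∀ a b, a ≤ b →
      Real.exp (-(k * b)) * W b - Real.exp (-(k * a)) * W a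
        = -∫ r in a..b, Real.exp (-(k * r)) * g r) :
    Tendsto W atTop (𝓝 (L / k)) := by
  -- integrability of the forcing term on right half-lines
  have hInteg : ∀ a : ℝ, IntegrableOn (fun r => Real.exp (-(k * r)) * g r) (Set.Ioi a) := by
    intro a
    refine Integrable.mono' ((expIntegrableOn hk a).const_mul M)
      ((Real.continuous_exp.comp (by continuity)).mul hgc).aestronglyMeasurable ?_
    refine ae_of_all _ fun r => ?_
    rw [Real.norm_eq_abs, abs_mul, Real.abs_exp, mul_comm M]
    exact mul_le_mul_of_nonneg_left (hM r) (Real.exp_pos _).le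
  -- key identity for all a b
  have key' : ∀ a b : ℝ, Real.exp (-(k * b)) * W b - Real.exp (-(k * a)) * W a
      = -∫ r in a..b, Real.exp (-(k * r)) * g r := by
    intro a b
    rcases le_total a b with h | h
    · exact key a b h
    · have h2 := key b a h
      rw [intervalIntegral.integral_symm]
      linarith
  set F : ℝ → ℝ := fun t => Real.exp (-(k * t)) * W t with hF
  have hFpos : ∀ t, 0 ≤ F t := fun t => mul_nonneg (Real.exp_pos _).le (hW0 t)
  -- F tends to a limit A
  set A : ℝ := F 0 - ∫ r in Set.Ioi 0, Real.exp (-(k * r)) * g r with hA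
  have hFt : Tendsto F atTop (𝓝 A) := by
    have h1 := intervalIntegral_tendsto_integral_Ioi 0 (hInteg 0) (tendsto_id (α := ℝ))
    have h2 : ∀ t, F t = F 0 - ∫ r in (0:ℝ)..t, Real.exp (-(k * r)) * g r := by
      intro t
      have := key' 0 t
      simp only [hF]
      linarith
    have h3 : Tendsto (fun t => F 0 - ∫ r in (0:ℝ)..t, Real.exp (-(k * r)) * g r)
        atTop (𝓝 A) := tendsto_const_nhds.sub h1
    exact h3.congr fun t => (h2 t).symm
  -- A = 0
  have hA0 : A = 0 := by
    rcases lt_trichotomy A 0 with hneg | h0 | hpos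
    · obtain ⟨t, ht⟩ := (hFt.eventually (eventually_lt_nhds hneg)).exists
      exact absurd (hFpos t) (not_le.2 ht)
    · exact h0
    · -- A > 0 : W stays above A/2 eventually, contradicting bounded integral
      have hev : ∀ᶠ t in atTop, A / 2 < F t :=
        hFt.eventually (eventually_gt_nhds (by linarith))
      obtain ⟨t₁, ht₁⟩ := eventually_atTop.1 hev
      set t₀ := max t₁ 0 with ht₀
      have hWlow : ∀ t, t₀ ≤ t → A / 2 ≤ W t := by
        intro t ht
        have h4 : A / 2 < F t := ht₁ t (le_trans (le_max_left _ _) ht)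
        have h5 : Real.exp (-(k * t)) ≤ 1 := by
          rw [Real.exp_le_one_iff]
          have htnn : 0 ≤ t := le_trans (le_max_right _ _) ht
          nlinarith
        calc A / 2 ≤ F t := h4.le
          _ = Real.exp (-(k * t)) * W t := rfl
          _ ≤ 1 * W t := mul_le_mul_of_nonneg_right h5 (hW0 t)
          _ = W t := one_mul _
      set b := t₀ + (|C| + 1) * (2 / A) with hb
      have hbge : t₀ ≤ b := by
        have h6 : 0 < (|C| + 1) * (2 / A) := by positivity
        rw [hb]
        linarith
      have hlow : (b - t₀) * (A / 2) ≤ ∫ r in t₀..b, W r := by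
        have := intervalIntegral.integral_mono_on hbge
          (show IntervalIntegrable (fun _ : ℝ => A / 2) volume t₀ b from continuous_const.intervalIntegrable t₀ b)
          (hWc.intervalIntegrable t₀ b)
          (fun x hx => hWlow x hx.1)
        rwa [intervalIntegral.integral_const, smul_eq_mul] at this
      have hhi := hInt t₀ b hbge
      have hcontr : (b - t₀) * (A / 2) = |C| + 1 := by
        rw [hb]
        field_simp
        ring
      have : |C| + 1 ≤ C := by rw [← hcontr]; linarith
      linarith [le_abs_self C]
  rw [hA0] at hFt
  -- formula for F s as an improper integral
  have hFs : ∀ s : ℝ, F s = ∫ r in Set.Ioi s, Real.exp (-(k * r)) * g r := by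
    intro s
    have h1 : Tendsto (fun t => F s - F t) atTop (𝓝 (F s - 0)) :=
      tendsto_const_nhds.sub hFt
    have h2 : (fun t => F s - F t) = fun t => ∫ r in s..t, Real.exp (-(k * r)) * g r := by
      funext t
      have := key' s t
      simp only [hF]
      linarith
    rw [h2] at h1
    have h3 := intervalIntegral_tendsto_integral_Ioi s (hInteg s) (tendsto_id (α := ℝ))
    have := tendsto_nhds_unique h1 h3
    simpa using this
  -- final estimate
  rw [Metric.tendsto_atTop]
  intro ε hε
  have hε2 : 0 < ε * k / 2 := by positivity
  obtain ⟨s₀, hs₀⟩ := (Metric.tendsto_atTop.1 hgL) (ε * k / 2) hε2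
  refine ⟨s₀, fun s hs => ?_⟩
  have hIdiff : IntegrableOn (fun r => Real.exp (-(k * r)) * (g r - L)) (Set.Ioi s) := by
    have h1 : (fun r => Real.exp (-(k * r)) * (g r - L))
        = fun r => Real.exp (-(k * r)) * g r - L * Real.exp (-(k * r)) := by
      funext r; ring
    rw [h1]
    exact (hInteg s).sub ((expIntegrableOn hk s).const_mul L)
  have hdiff : F s - L * Real.exp (-(k * s)) / k
      = ∫ r in Set.Ioi s, Real.exp (-(k * r)) * (g r - L) := by
    have h1 : (fun r => Real.exp (-(k * r)) * (g r - L))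
        = fun r => Real.exp (-(k * r)) * g r - L * Real.exp (-(k * r)) := by
      funext r; ring
    rw [h1, integral_sub (hInteg s) ((expIntegrableOn hk s).const_mul L),
      integral_const_mul, intExpIoi hk, hFs s]
    ring
  have hbound : |F s - L * Real.exp (-(k * s)) / k| ≤ ε / 2 * Real.exp (-(k * s)) := by
    rw [hdiff]
    have h2 : ∀ᵐ r ∂(volume.restrict (Set.Ioi s)),
        ‖Real.exp (-(k * r)) * (g r - L)‖ ≤ (ε * k / 2) * Real.exp (-(k * r)) := by
      rw [ae_restrict_iff' measurableSet_Ioi]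
      refine ae_of_all _ fun r hr => ?_
      have hrs : s₀ ≤ r := le_trans hs (le_of_lt hr)
      have := hs₀ r hrs
      rw [Real.dist_eq] at this
      rw [Real.norm_eq_abs, abs_mul, Real.abs_exp]
      calc Real.exp (-(k * r)) * |g r - L|
          ≤ Real.exp (-(k * r)) * (ε * k / 2) :=
            mul_le_mul_of_nonneg_left this.le (Real.exp_pos _).le
        _ = (ε * k / 2) * Real.exp (-(k * r)) := by ring
    have h3 := norm_integral_le_of_norm_le ((expIntegrableOn hk s).const_mul (ε * k / 2)) h2
    rw [Real.norm_eq_abs] at h3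
    calc |∫ r in Set.Ioi s, Real.exp (-(k * r)) * (g r - L)|
        ≤ ∫ r in Set.Ioi s, (ε * k / 2) * Real.exp (-(k * r)) := h3
      _ = (ε * k / 2) * (Real.exp (-(k * s)) / k) := by
          rw [integral_const_mul, intExpIoi hk]
      _ = ε / 2 * Real.exp (-(k * s)) := by field_simp
  have hWs : W s - L / k = Real.exp (k * s) * (F s - L * Real.exp (-(k * s)) / k) := by
    simp only [hF]
    rw [mul_sub, ← mul_assoc, ← Real.exp_add]
    have e1 : Real.exp (k * s + -(k * s)) = 1 := by simp
    rw [e1, one_mul]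
    have e2 : Real.exp (k * s) * (L * Real.exp (-(k * s)) / k)
        = L / k * Real.exp (k * s + -(k * s)) := by rw [Real.exp_add]; ring
    rw [e2, e1, mul_one]
  rw [Real.dist_eq, hWs, abs_mul, Real.abs_exp]
  calc Real.exp (k * s) * |F s - L * Real.exp (-(k * s)) / k|
      ≤ Real.exp (k * s) * (ε / 2 * Real.exp (-(k * s))) :=
        mul_le_mul_of_nonneg_left hbound (Real.exp_pos _).le
    _ = ε / 2 * Real.exp (k * s + -(k * s)) := by rw [Real.exp_add]; ring
    _ = ε / 2 := by simp
    _ < ε := by linarith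


lemma lim_zero_top {W : ℝ → ℝ} {l C : ℝ} (hWc : Continuous W)
    (hint : ∀ a b : ℝ, a ≤ b → (∫ r in a..b, W r) ≤ C)
    (h0 : ∀ s, 0 ≤ W s) (hW : Tendsto W atTop (𝓝 l)) : l = 0 := by
  have hl0 : 0 ≤ l := _root_.ge_of_tendsto hW (Eventually.of_forall h0)
  rcases eq_or_lt_of_le hl0 with h | hpos
  · exact h.symm
  exfalso
  obtain ⟨N, hN⟩ := (Metric.tendsto_atTop.1 hW) (l / 2) (by positivity)
  have hWge : ∀ s, N ≤ s → l / 2 ≤ W s := by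
    intro s hsN
    have h1 := hN s hsN
    rw [Real.dist_eq] at h1
    have := abs_lt.1 h1
    linarith [this.1]
  set b := N + (|C| + 1) * (2 / l) with hb
  have hbge : N ≤ b := by
    have h6 : 0 < (|C| + 1) * (2 / l) := by positivity
    rw [hb]; linarith
  have hlow : (b - N) * (l / 2) ≤ ∫ r in N..b, W r := by
    have h7 := intervalIntegral.integral_mono_on hbge
      (show IntervalIntegrable (fun _ : ℝ => l / 2) volume N b from
        continuous_const.intervalIntegrable N b)
      (hWc.intervalIntegrable N b) (fun x hx => hWge x hx.1)
    rwa [intervalIntegral.integral_const, smul_eq_mul] at h7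
  have hcontr : (b - N) * (l / 2) = |C| + 1 := by
    rw [hb]; field_simp; ring
  have := hint N b hbge
  have := le_abs_self C
  linarith

lemma lim_zero_bot {W : ℝ → ℝ} {l C : ℝ} (hWc : Continuous W)
    (hint : ∀ a b : ℝ, a ≤ b → (∫ r in a..b, W r) ≤ C)
    (h0 : ∀ s, 0 ≤ W s) (hW : Tendsto W atBot (𝓝 l)) : l = 0 := by
  have hl0 : 0 ≤ l := _root_.ge_of_tendsto hW (Eventually.of_forall h0)
  rcases eq_or_lt_of_le hl0 with h | hpos
  · exact h.symm
  exfalso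
  obtain ⟨N, hN⟩ := eventually_atBot.1 (Metric.tendsto_nhds.1 hW (l / 2) (by positivity))
  have hWge : ∀ s, s ≤ N → l / 2 ≤ W s := by
    intro s hsN
    have h1 := hN s hsN
    rw [Real.dist_eq] at h1
    have := abs_lt.1 h1
    linarith [this.1]
  set a := N - (|C| + 1) * (2 / l) with ha
  have hale : a ≤ N := by
    have h6 : 0 < (|C| + 1) * (2 / l) := by positivity
    rw [ha]; linarith
  have hlow : (N - a) * (l / 2) ≤ ∫ r in a..N, W r := by
    have h7 := intervalIntegral.integral_mono_on hale
      (show IntervalIntegrable (fun _ : ℝ => l / 2) volume a N from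
        continuous_const.intervalIntegrable a N)
      (hWc.intervalIntegrable a N) (fun x hx => hWge x hx.2)
    rwa [intervalIntegral.integral_const, smul_eq_mul] at h7
  have hcontr : (N - a) * (l / 2) = |C| + 1 := by
    rw [ha]; field_simp; ring
  have := hint a N hale
  have := le_abs_self C
  linarith

/-- If `U` is a bounded, nondecreasing, `C²` solution of
`c U' = D U'' + G(U)` on `ℝ` with `c > 0`, `D > 0` and `G` continuous, then the
limits `U(±∞)` exist, `U' → 0` and `U'' → 0` at `±∞`, and `G(U(-∞)) = G(U(+∞)) = 0`. -/
theorem travelling_wave_ODE_limits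
    (c D : ℝ) (G : ℝ → ℝ) (U : ℝ → ℝ)
    (hc : 0 < c) (hD : 0 < D) (hG : Continuous G)
    (hU_C2 : ContDiff ℝ 2 U)
    (hU_bdd : ∃ R : ℝ, ∀ s, |U s| ≤ R)
    (hU_mono : Monotone U)
    (hU_eq : ∀ s, c * deriv U s = D * deriv (deriv U) s + G (U s)) :
    ∃ Um Up : ℝ,
      Tendsto U atBot (𝓝 Um) ∧ Tendsto U atTop (𝓝 Up) ∧
      Tendsto (deriv U) atBot (𝓝 0) ∧ Tendsto (deriv U) atTop (𝓝 0) ∧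
      Tendsto (deriv (deriv U)) atBot (𝓝 0) ∧
      Tendsto (deriv (deriv U)) atTop (𝓝 0) ∧
      G Um = 0 ∧ G Up = 0 := by
  obtain ⟨R, hR⟩ := hU_bdd
  have hbddA : BddAbove (Set.range U) := ⟨R, by rintro _ ⟨s, rfl⟩; exact (abs_le.1 (hR s)).2⟩
  have hbddB : BddBelow (Set.range U) := ⟨-R, by rintro _ ⟨s, rfl⟩; exact (abs_le.1 (hR s)).1⟩
  have hUtop : Tendsto U atTop (𝓝 (⨆ s, U s)) := tendsto_atTop_ciSup hU_mono hbddA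
  have hUbot : Tendsto U atBot (𝓝 (⨅ s, U s)) := tendsto_atBot_ciInf hU_mono hbddB
  set Up := ⨆ s, U s with hUp
  set Um := ⨅ s, U s with hUm
  -- regularity
  have hU2' : ContDiff ℝ ((1 : WithTop ℕ∞) + 1) U := by
    have h21 : ((1 : WithTop ℕ∞) + 1) = 2 := by norm_num
    rw [h21]; exact hU_C2
  obtain ⟨hU_d, -, hdU_C1⟩ := contDiff_succ_iff_deriv.1 hU2'
  have hW_c : Continuous (deriv U) := hdU_C1.continuous
  obtain ⟨hdU_d, hddU_c⟩ := contDiff_one_iff_deriv.1 hdU_C1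
  have hW0 : ∀ s, 0 ≤ deriv U s := fun s => hU_mono.deriv_nonneg'' (hU_d s)
  have hkpos : 0 < c / D := div_pos hc hD
  have hgc : Continuous (fun s => G (U s) / D) := (hG.comp hU_C2.continuous).div_const D
  -- the basic integral identity
  have hkey : ∀ a b : ℝ, a ≤ b →
      Real.exp (-(c / D * b)) * deriv U b - Real.exp (-(c / D * a)) * deriv U a
        = -∫ r in a..b, Real.exp (-(c / D * r)) * (G (U r) / D) := by
    intro a b hab
    have hderiv : ∀ r ∈ Set.uIcc a b,
        HasDerivAt (fun t => Real.exp (-(c / D * t)) * deriv U t)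
          (-(Real.exp (-(c / D * r)) * (G (U r) / D))) r := by
      intro r _
      have h1 := hasDeriv_exp_negmul (c / D) r
      have h2 : HasDerivAt (deriv U) (deriv (deriv U) r) r := (hdU_d r).hasDerivAt
      have h3 := h1.mul h2
      have hdd : deriv (deriv U) r = (c * deriv U r - G (U r)) / D := by
        field_simp
        linarith [hU_eq r]
      refine h3.congr_deriv ?_
      rw [hdd]
      field_simp
      ring
    have hcont : Continuous fun r => -(Real.exp (-(c / D * r)) * (G (U r) / D)) :=
      ((Real.continuous_exp.comp (continuous_const.mul continuous_id).neg).mul hgc).neg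
    have h4 := intervalIntegral.integral_eq_sub_of_hasDerivAt hderiv
      (hcont.intervalIntegrable a b)
    rw [intervalIntegral.integral_neg] at h4
    linarith
  -- FTC bound on integrals of deriv U
  have hInt : ∀ a b : ℝ, a ≤ b → (∫ r in a..b, deriv U r) ≤ 2 * R := by
    intro a b hab
    rw [intervalIntegral.integral_deriv_eq_sub (fun x _ => hU_d x)
      (hW_c.intervalIntegrable a b)]
    have h5 := abs_le.1 (hR a)
    have h6 := abs_le.1 (hR b)
    linarith [h5.1, h6.2]
  -- bound on the forcing term
  obtain ⟨Mg, hMg⟩ := (isCompact_Icc (a := -R) (b := R)).exists_bound_of_continuousOn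
    hG.continuousOn
  have hM : ∀ r : ℝ, |G (U r) / D| ≤ Mg / D := by
    intro r
    rw [abs_div, abs_of_pos hD]
    have h7 : |G (U r)| ≤ Mg := by
      have := hMg (U r) (abs_le.1 (hR r))
      simpa [Real.norm_eq_abs] using this
    gcongr
  -- limits of the forcing term
  have hgLtop : Tendsto (fun s => G (U s) / D) atTop (𝓝 (G Up / D)) :=
    (((hG.tendsto Up).comp hUtop).div_const D)
  have hgLbot : Tendsto (fun s => G (U s) / D) atBot (𝓝 (G Um / D)) :=
    (((hG.tendsto Um).comp hUbot).div_const D)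
  -- limits of deriv U
  have hWtop : Tendsto (deriv U) atTop (𝓝 (G Up / D / (c / D))) :=
    tendsto_deriv_atTop hkpos hgc hW0 hM hInt hW_c hgLtop hkey
  have hWbot : Tendsto (deriv U) atBot (𝓝 (G Um / D / (c / D))) :=
    tendsto_deriv_atBot hkpos hgc hgLbot hkey
  have hvtop : G Up / D / (c / D) = G Up / c := by
    field_simp
  have hvbot : G Um / D / (c / D) = G Um / c := by
    field_simp
  rw [hvtop] at hWtop
  rw [hvbot] at hWbot
  -- the limits must vanish
  have htop0 : G Up / c = 0 := lim_zero_top hW_c hInt hW0 hWtop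
  have hbot0 : G Um / c = 0 := lim_zero_bot hW_c hInt hW0 hWbot
  have hGUp : G Up = 0 := by
    rcases div_eq_zero_iff.1 htop0 with h | h
    · exact h
    · exact absurd h hc.ne'
  have hGUm : G Um = 0 := by
    rcases div_eq_zero_iff.1 hbot0 with h | h
    · exact h
    · exact absurd h hc.ne'
  rw [htop0] at hWtop
  rw [hbot0] at hWbot
  -- second derivative limits
  have hddfun : deriv (deriv U) = fun s => (c * deriv U s - G (U s)) / D := by
    funext s
    field_simp
    linarith [hU_eq s]
  have hddtop : Tendsto (deriv (deriv U)) atTop (𝓝 0) := by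
    rw [hddfun]
    have h8 : Tendsto (fun s => (c * deriv U s - G (U s)) / D) atTop
        (𝓝 ((c * 0 - G Up) / D)) :=
      ((tendsto_const_nhds.mul hWtop).sub ((hG.tendsto Up).comp hUtop)).div_const D
    simpa [hGUp] using h8
  have hddbot : Tendsto (deriv (deriv U)) atBot (𝓝 0) := by
    rw [hddfun]
    have h9 : Tendsto (fun s => (c * deriv U s - G (U s)) / D) atBot
        (𝓝 ((c * 0 - G Um) / D)) :=
      ((tendsto_const_nhds.mul hWbot).sub ((hG.tendsto Um).comp hUbot)).div_const D
    simpa [hGUm] using h9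
  exact ⟨Um, Up, hUbot, hUtop, hWbot, hWtop, hddbot, hddtop, hGUm, hGUp⟩
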